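/- Let V be a 4-dimensional real vector space with an inner product g of split signature (+,+,−,−), extended complex-bilinearly to V⊗ℂ. Then every 2-dimensional totally null complex subspace N of V⊗ℂ has real index zero or two (never one). -/

import Mathlib

/-!
STATEMENT 2: Let V be a 4-dimensional real vector space with an inner product g of
split signature (+,+,−,−), extended complex-bilinearly to V⊗ℂ. Then every
2-dimensional totally null complex subspace N of V⊗ℂ has real index zero or two
(never one).

The real index of N is dim_ℂ (N ∩ conj N).
-/

open scoped ComplexConjugate

/-- Coordinatewise complex conjugation on `Fin 4 → ℂ`, as a `conj`-semilinear map. -/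
noncomputable def conjMap : (Fin 4 → ℂ) →ₛₗ[starRingEnd ℂ] (Fin 4 → ℂ) where
  toFun w := fun i => conj (w i)
  map_add' x y := by funext i; simp
  map_smul' c x := by funext i; simp [mul_comm]

/-- The real part of a complexified vector. -/
noncomputable def reVec (w : Fin 4 → ℂ) : Fin 4 → ℝ := fun i => (w i).re

/-- The imaginary part of a complexified vector. -/
noncomputable def imVec (w : Fin 4 → ℂ) : Fin 4 → ℝ := fun i => (w i).im

/-- The complex-bilinear extension of a real bilinear form `gR` to the
complexification. -/
noncomputable def gCext (gR : (Fin 4 → ℝ) → (Fin 4 → ℝ) → ℝ)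
    (x y : Fin 4 → ℂ) : ℂ :=
  (gR (reVec x) (reVec y) - gR (imVec x) (imVec y) : ℝ) +
    Complex.I * ((gR (reVec x) (imVec y) + gR (imVec x) (reVec y) : ℝ) : ℂ)

/-- The split signature matrix diag(1,1,-1,-1). -/
noncomputable def etaS : Fin 4 → Fin 4 → ℝ :=
  fun i j => if i = j then (if (i : ℕ) < 2 then 1 else -1) else 0

private lemma dep2 (p0 p1 q0 q1 r0 r1 : ℝ) :
    ∃ α β γ : ℝ, ¬(α = 0 ∧ β = 0 ∧ γ = 0) ∧
      α*p0 + β*q0 + γ*r0 = 0 ∧ α*p1 + β*q1 + γ*r1 = 0 := by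
  by_cases hd : q0*r1 - q1*r0 = 0
  · by_cases hA : q0 = 0 ∧ r0 = 0
    · by_cases hB : q1 = 0 ∧ r1 = 0
      · exact ⟨0, 0, 1, by simp, by simp [hA.2], by simp [hB.2]⟩
      · refine ⟨0, r1, -q1, ?_, by rw [hA.1, hA.2]; ring, by ring⟩
        rintro ⟨-, h1, h2⟩
        exact hB ⟨by linarith [neg_eq_zero.mp h2], h1⟩
    · refine ⟨0, r0, -q0, ?_, by ring, by linear_combination -hd⟩
      rintro ⟨-, h1, h2⟩
      exact hA ⟨by linarith [neg_eq_zero.mp h2], h1⟩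
  · exact ⟨q0*r1 - q1*r0, p1*r0 - p0*r1, p0*q1 - p1*q0,
      fun h => hd h.1, by ring, by ring⟩

private lemma sq_add_sq_nonpos {x y : ℝ} (h : x^2 + y^2 ≤ 0) : x = 0 ∧ y = 0 := by
  constructor <;> nlinarith [sq_nonneg x, sq_nonneg y]

/-- Three real vectors in split-signature `ℝ⁴` that are pairwise orthogonal, with the
first null and the last two of equal length, are linearly dependent. -/
private lemma L1 (v a b : Fin 4 → ℝ)
    (hvv : v 0*v 0 + v 1*v 1 - v 2*v 2 - v 3*v 3 = 0)
    (hva : v 0*a 0 + v 1*a 1 - v 2*a 2 - v 3*a 3 = 0)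
    (hvb : v 0*b 0 + v 1*b 1 - v 2*b 2 - v 3*b 3 = 0)
    (hab : a 0*b 0 + a 1*b 1 - a 2*b 2 - a 3*b 3 = 0)
    (haabb : a 0*a 0 + a 1*a 1 - a 2*a 2 - a 3*a 3
           = b 0*b 0 + b 1*b 1 - b 2*b 2 - b 3*b 3) :
    ∃ α β γ : ℝ, ¬(α = 0 ∧ β = 0 ∧ γ = 0) ∧
      ∀ i, α * v i + β * a i + γ * b i = 0 := by
  rcases le_or_gt 0 (a 0*a 0 + a 1*a 1 - a 2*a 2 - a 3*a 3) with hts | hts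
  · obtain ⟨α, β, γ, hne, h0, h1⟩ := dep2 (v 0) (v 1) (a 0) (a 1) (b 0) (b 1)
    refine ⟨α, β, γ, hne, ?_⟩
    have key : (α*v 2 + β*a 2 + γ*b 2)^2 + (α*v 3 + β*a 3 + γ*b 3)^2
        = (α*v 0 + β*a 0 + γ*b 0)^2 + (α*v 1 + β*a 1 + γ*b 1)^2
          - (β^2+γ^2)*(a 0*a 0 + a 1*a 1 - a 2*a 2 - a 3*a 3) := by
      linear_combination (-(α^2))*hvv + (-(2*α*β))*hva + (-(2*α*γ))*hvb
        + (-(2*β*γ))*hab + (γ^2)*haabb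
    rw [h0, h1] at key
    have hmul : 0 ≤ (β^2+γ^2)*(a 0*a 0 + a 1*a 1 - a 2*a 2 - a 3*a 3) :=
      mul_nonneg (by positivity) hts
    have h2 := sq_add_sq_nonpos (x := α*v 2 + β*a 2 + γ*b 2)
      (y := α*v 3 + β*a 3 + γ*b 3) (by linarith)
    intro i
    fin_cases i
    · exact h0
    · exact h1
    · exact h2.1
    · exact h2.2
  · obtain ⟨α, β, γ, hne, h2, h3⟩ := dep2 (v 2) (v 3) (a 2) (a 3) (b 2) (b 3)
    refine ⟨α, β, γ, hne, ?_⟩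
    have key : (α*v 0 + β*a 0 + γ*b 0)^2 + (α*v 1 + β*a 1 + γ*b 1)^2
        = (α*v 2 + β*a 2 + γ*b 2)^2 + (α*v 3 + β*a 3 + γ*b 3)^2
          + (β^2+γ^2)*(a 0*a 0 + a 1*a 1 - a 2*a 2 - a 3*a 3) := by
      linear_combination (α^2)*hvv + (2*α*β)*hva + (2*α*γ)*hvb
        + (2*β*γ)*hab + (-(γ^2))*haabb
    rw [h2, h3] at key
    have hmul : (β^2+γ^2)*(a 0*a 0 + a 1*a 1 - a 2*a 2 - a 3*a 3) ≤ 0 :=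
      mul_nonpos_of_nonneg_of_nonpos (by positivity) hts.le
    have h01 := sq_add_sq_nonpos (x := α*v 0 + β*a 0 + γ*b 0)
      (y := α*v 1 + β*a 1 + γ*b 1) (by linarith)
    intro i
    fin_cases i
    · exact h01.1
    · exact h01.2
    · exact h2
    · exact h3

private lemma fv3 : ((3:Fin 4):ℕ) = 3 := rfl
private lemma fv2 : ((2:Fin 4):ℕ) = 2 := rfl

/-- The bilinear form in coordinates with respect to the orthonormal-type basis. -/
private lemma gR_repr (gR : (Fin 4 → ℝ) →ₗ[ℝ] (Fin 4 → ℝ) →ₗ[ℝ] ℝ)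
    (b : Module.Basis (Fin 4) ℝ (Fin 4 → ℝ))
    (hsig : ∀ i j, gR (b i) (b j) = etaS i j) (x y : Fin 4 → ℝ) :
    gR x y = (b.repr x 0)*(b.repr y 0) + (b.repr x 1)*(b.repr y 1)
      - (b.repr x 2)*(b.repr y 2) - (b.repr x 3)*(b.repr y 3) := by
  conv_lhs => rw [← b.sum_repr x, ← b.sum_repr y]
  simp only [map_sum, map_smul, LinearMap.sum_apply, LinearMap.smul_apply, hsig,
    smul_eq_mul]
  rw [Fin.sum_univ_four]
  simp only [Fin.sum_univ_four]
  norm_num [etaS, Fin.ext_iff, fv2, fv3]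
  ring

private lemma cri {r s : ℝ} (h : (r:ℂ) + Complex.I * s = 0) : r = 0 ∧ s = 0 := by
  have hre := congrArg Complex.re h
  have him := congrArg Complex.im h
  simp at hre him
  exact ⟨hre, him⟩

theorem split_totally_null_two_plane_has_real_index_zero_or_two
    (gR : (Fin 4 → ℝ) →ₗ[ℝ] (Fin 4 → ℝ) →ₗ[ℝ] ℝ)
    (hsymm : ∀ v w, gR v w = gR w v)
    (b : Module.Basis (Fin 4) ℝ (Fin 4 → ℝ))
    (hsig : ∀ i j, gR (b i) (b j) = etaS i j)
    (N : Submodule ℂ (Fin 4 → ℂ))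
    (hdim : Module.finrank ℂ N = 2)
    (hnull : ∀ x ∈ N, ∀ y ∈ N, gCext (fun v w => gR v w) x y = 0) :
    Module.finrank ℂ ↥(N ⊓ Submodule.comap conjMap N) = 0 ∨
      Module.finrank ℂ ↥(N ⊓ Submodule.comap conjMap N) = 2 := by
  set M : Submodule ℂ (Fin 4 → ℂ) := N ⊓ Submodule.comap conjMap N with hMdef
  have hconjconj : ∀ x, conjMap (conjMap x) = x := by
    intro x; funext i; simp [conjMap]
  have hmemM : ∀ x, x ∈ M ↔ x ∈ N ∧ conjMap x ∈ N := by
    intro x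
    simp [hMdef, Submodule.mem_inf, Submodule.mem_comap]
  have hMN : M ≤ N := inf_le_left
  have hle2 : Module.finrank ℂ M ≤ 2 := hdim ▸ Submodule.finrank_mono hMN
  by_contra hcon
  push_neg at hcon
  have hM1 : Module.finrank ℂ M = 1 := by omega
  -- get a nonzero real (conj-fixed) vector v in M
  have hMne : M ≠ ⊥ := by
    intro h
    rw [h] at hM1
    simp at hM1
  obtain ⟨x, hxM, hxne⟩ := Submodule.exists_mem_ne_zero_of_ne_bot hMne
  have hxbar : conjMap x ∈ M := by
    rw [hmemM] at hxM ⊢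
    exact ⟨hxM.2, by rw [hconjconj]; exact hxM.1⟩
  obtain ⟨v, hvM, hvreal, hvne⟩ :
      ∃ v, v ∈ M ∧ conjMap v = v ∧ v ≠ 0 := by
    by_cases h1 : x + conjMap x = 0
    · refine ⟨Complex.I • (x - conjMap x), Submodule.smul_mem _ _
        (Submodule.sub_mem _ hxM hxbar), ?_, ?_⟩
      · funext i
        show conj (Complex.I * (x i - conj (x i))) = Complex.I * (x i - conj (x i))
        rw [map_mul, map_sub, Complex.conj_conj, Complex.conj_I]
        ring
      · intro h
        apply hxne
        funext i
        have h1i : x i + conj (x i) = 0 := congrFun h1 i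
        have hi : Complex.I * (x i - conj (x i)) = 0 := congrFun h i
        have h2i : x i - conj (x i) = 0 := by
          rcases mul_eq_zero.mp hi with h' | h'
          · exact absurd h' Complex.I_ne_zero
          · exact h'
        have : (2:ℂ) * x i = 0 := by linear_combination h1i + h2i
        simpa using this
    · refine ⟨x + conjMap x, Submodule.add_mem _ hxM hxbar, ?_, h1⟩
      funext i
      show conj (x i + conj (x i)) = x i + conj (x i)
      rw [map_add, Complex.conj_conj]
      ring
  have hvim : ∀ i, (v i).im = 0 := fun i =>
    Complex.conj_eq_iff_im.mp (congrFun hvreal i)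
  set vR : Fin 4 → ℝ := reVec v with hvRdef
  have hvRe : ∀ i, v i = ((vR i : ℝ) : ℂ) := by
    intro i
    apply Complex.ext
    · simp [hvRdef, reVec]
    · simp [hvim i]
  -- get w ∈ N not in span of v
  have hvN : v ∈ N := hMN hvM
  have hspan_le : Submodule.span ℂ {v} ≤ N := by
    simpa [Submodule.span_le, Set.singleton_subset_iff] using hvN
  have hlt : Submodule.span ℂ {v} < N := by
    refine lt_of_le_of_ne hspan_le (fun h => ?_)
    rw [← h, finrank_span_singleton hvne] at hdim
    omega
  obtain ⟨w, hwN, hwns⟩ := SetLike.exists_of_lt hlt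
  set aw : Fin 4 → ℝ := reVec w with hawdef
  set bw : Fin 4 → ℝ := imVec w with hbwdef
  have him0 : imVec v = 0 := funext hvim
  -- extract real bilinear relations
  have h_v_v := hnull v hvN v hvN
  have h_v_w := hnull v hvN w hwN
  have h_w_w := hnull w hwN w hwN
  rw [gCext] at h_v_v h_v_w h_w_w
  simp only [him0, map_zero, LinearMap.zero_apply] at h_v_v h_v_w h_w_w
  obtain ⟨e1, -⟩ := cri h_v_v
  obtain ⟨e2, e3⟩ := cri h_v_w
  obtain ⟨e4, e5⟩ := cri h_w_w
  simp only [sub_zero, add_zero, zero_add] at e1 e2 e3 e4 e5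
  -- e1 : gR vR vR = 0, e2 : gR vR aw = 0, e3 : gR vR bw = 0
  -- e4 : gR aw aw - gR bw bw = 0, e5 : gR aw bw + gR bw aw = 0
  have gvv : gR vR vR = 0 := e1
  have gva : gR vR aw = 0 := e2
  have gvb : gR vR bw = 0 := e3
  have gaabb : gR aw aw = gR bw bw := by linarith [e4]
  have gab : gR aw bw = 0 := by
    have := hsymm aw bw
    linarith [e5]
  -- coordinates
  obtain ⟨α, β, γ, hne, hdep⟩ := L1 (fun i => b.repr vR i) (fun i => b.repr aw i)
      (fun i => b.repr bw i)
      (by rw [gR_repr gR b hsig] at gvv; exact gvv)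
      (by rw [gR_repr gR b hsig] at gva; exact gva)
      (by rw [gR_repr gR b hsig] at gvb; exact gvb)
      (by rw [gR_repr gR b hsig] at gab; exact gab)
      (by rw [gR_repr gR b hsig aw aw, gR_repr gR b hsig bw bw] at gaabb; exact gaabb)
  have hz : α • vR + β • aw + γ • bw = 0 := by
    have hrepr : b.repr (α • vR + β • aw + γ • bw) = 0 := by
      ext i
      have := hdep i
      simp only [map_add, map_smul, Finsupp.coe_add, Finsupp.coe_smul, Pi.add_apply,
        Pi.smul_apply, smul_eq_mul, Finsupp.coe_zero, Pi.zero_apply]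
      linarith [hdep i]
    exact (LinearEquiv.map_eq_zero_iff b.repr).mp hrepr
  have hzi : ∀ i, α * vR i + β * aw i + γ * bw i = 0 := by
    intro i
    have := congrFun hz i
    simpa using this
  by_cases hβγ : β = 0 ∧ γ = 0
  · have hα : α ≠ 0 := fun h => hne ⟨h, hβγ.1, hβγ.2⟩
    apply hvne
    funext i
    have := hzi i
    rw [hβγ.1, hβγ.2] at this
    simp at this
    rcases this with h' | h'
    · exact absurd h' hα
    · rw [hvRe i, h']; simp
  · set c : ℂ := (γ:ℂ) - (β:ℂ) * Complex.I with hcdef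
    have hc : c ≠ 0 := by
      intro h
      rw [Complex.ext_iff] at h
      simp [hcdef] at h
      exact hβγ ⟨h.2, h.1⟩
    set Bc : Fin 4 → ℂ := fun i => ((bw i : ℝ) : ℂ) with hBcdef
    have key : c • Bc = (-(α:ℂ)) • v + (-(β:ℂ)) • w := by
      funext i
      show c * (bw i : ℂ) = -(α:ℂ) * v i + (-(β:ℂ)) * w i
      rw [hvRe i, ← Complex.re_add_im (w i)]
      have hri : ((α * vR i + β * aw i + γ * bw i : ℝ) : ℂ) = 0 := by
        rw [hzi i]; simp
      have haw : ((w i).re : ℂ) = ((aw i : ℝ) : ℂ) := rfl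
      have hbw : ((w i).im : ℂ) = ((bw i : ℝ) : ℂ) := rfl
      rw [haw, hbw, hcdef]
      push_cast at hri ⊢
      linear_combination hri
    have hBN : Bc ∈ N := by
      have h1 : ((-(α:ℂ)) • v + (-(β:ℂ)) • w) ∈ N :=
        Submodule.add_mem _ (Submodule.smul_mem _ _ hvN) (Submodule.smul_mem _ _ hwN)
      rw [← key] at h1
      have := Submodule.smul_mem N c⁻¹ h1
      rwa [smul_smul, inv_mul_cancel₀ hc, one_smul] at this
    have hconjz : ∀ z : ℂ, conj z = z - 2*Complex.I*(z.im:ℂ) := by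
      intro z
      apply Complex.ext
      · simp
      · simp
        ring
    have hcw : conjMap w = w - ((2:ℂ)*Complex.I) • Bc := by
      funext i
      show conj (w i) = w i - (2*Complex.I) * (bw i : ℂ)
      rw [hconjz (w i)]
      rfl
    have hcwN : conjMap w ∈ N := by
      rw [hcw]
      exact Submodule.sub_mem _ hwN (Submodule.smul_mem _ _ hBN)
    have hcwM : conjMap w ∈ M := by
      rw [hmemM]
      exact ⟨hcwN, by rw [hconjconj]; exact hwN⟩
    have hli : LinearIndependent ℂ ![conjMap w, v] := by
      refine linearIndependent_fin2.mpr ⟨hvne, fun μ h => ?_⟩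
      apply hwns
      simp only [Matrix.cons_val_one, Matrix.head_cons, Matrix.cons_val_zero] at h
      have h2 : conjMap (μ • v) = conjMap (conjMap w) := by rw [h]
      rw [LinearMap.map_smulₛₗ, hvreal, hconjconj] at h2
      rw [Submodule.mem_span_singleton]
      exact ⟨conj μ, h2⟩
    have hrank : Module.finrank ℂ (Submodule.span ℂ (Set.range ![conjMap w, v])) = 2 := by
      simpa using finrank_span_eq_card hli
    have hsub : Submodule.span ℂ (Set.range ![conjMap w, v]) ≤ M := by
      rw [Submodule.span_le]
      rintro z ⟨i, rfl⟩
      fin_cases i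
      · exact hcwM
      · exact hvM
    have := Submodule.finrank_mono hsub
    omega
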